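/- The image of φₙ is globular: for every n ≥ 2, every i with 2 ≤ i ≤ n, and all x, x' ∈ Iⁿ such that xᵢ = x'ᵢ ∈ {−1,1} and xⱼ = x'ⱼ for every j with i < j ≤ n, one has φₙ(x) = φₙ(x'). In other words, on each face {xᵢ = ±1} with i ≥ 2, the map φₙ depends only on the coordinates x_{i+1},…,xₙ. -/

import Mathlib

/-- The comparison map φₙ : Iⁿ → Gⁿ, defined recursively by φ₁(x₁) = x₁ and
    φₙ(t, y) = (t·√(1 − ‖φₙ₋₁(y)‖²), φₙ₋₁(y)). -/
noncomputable def phi : (n : ℕ) → EuclideanSpace ℝ (Fin n) → EuclideanSpace ℝ (Fin n)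
  | 0, x => x
  | n + 1, x =>
    WithLp.toLp 2 (Fin.cons (x 0 * Real.sqrt (1 - ‖phi n (WithLp.toLp 2 (fun i => x i.succ))‖ ^ 2))
        (phi n (WithLp.toLp 2 (fun i => x i.succ))) : Fin (n + 1) → ℝ)

/-- The n-cube Iⁿ = [−1,1]ⁿ, inside Euclidean n-space. -/
def cube (n : ℕ) : Set (EuclideanSpace ℝ (Fin n)) := {x | ∀ i, |x i| ≤ 1}

/-- The n-disk Dⁿ = {x : ‖x‖ ≤ 1}, the underlying space of the n-globe Gⁿ. -/
def disk (n : ℕ) : Set (EuclideanSpace ℝ (Fin n)) := {x | ‖x‖ ≤ 1}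

lemma phi_norm_sq (n : ℕ) (x : EuclideanSpace ℝ (Fin (n + 1))) :
    ‖phi (n + 1) x‖ ^ 2 =
      (x 0 * Real.sqrt (1 - ‖phi n (WithLp.toLp 2 (fun i => x i.succ))‖ ^ 2)) ^ 2 +
        ‖phi n (WithLp.toLp 2 (fun i => x i.succ))‖ ^ 2 := by
  have h1 : ‖phi (n+1) x‖ ^ 2 = ∑ j, (phi (n+1) x j) ^ 2 := by
    rw [EuclideanSpace.norm_eq, Real.sq_sqrt (by positivity)]
    simp [sq_abs]
  have h2 : ‖phi n (WithLp.toLp 2 (fun i => x i.succ))‖ ^ 2 = ∑ j, (phi n (WithLp.toLp 2 (fun i => x i.succ)) j) ^ 2 := by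
    rw [EuclideanSpace.norm_eq, Real.sq_sqrt (by positivity)]
    simp [sq_abs]
  rw [h1]
  show (∑ j, ((Fin.cons (x 0 * Real.sqrt (1 - ‖phi n (WithLp.toLp 2 (fun i => x i.succ))‖ ^ 2))
        (phi n (WithLp.toLp 2 (fun i => x i.succ))) : Fin (n + 1) → ℝ) j) ^ 2) = _
  rw [Fin.sum_univ_succ]
  simp only [Fin.cons_zero, Fin.cons_succ]
  rw [h2]

lemma phi_norm_le (n : ℕ) (x : EuclideanSpace ℝ (Fin n)) (hx : x ∈ cube n) :
    ‖phi n x‖ ≤ 1 := by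
  induction n with
  | zero => simp [phi, EuclideanSpace.norm_eq]
  | succ n ih =>
    have hy : (WithLp.toLp 2 (fun i => x i.succ)) ∈ cube n := fun k => hx k.succ
    have hp := ih _ hy
    have hpn : (0:ℝ) ≤ ‖phi n (WithLp.toLp 2 (fun i => x i.succ))‖ := norm_nonneg _
    have hsq := phi_norm_sq n x
    have hns : (0:ℝ) ≤ 1 - ‖phi n (WithLp.toLp 2 (fun i => x i.succ))‖ ^ 2 := by nlinarith
    have hs : Real.sqrt (1 - ‖phi n (WithLp.toLp 2 (fun i => x i.succ))‖ ^ 2) ^ 2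
        = 1 - ‖phi n (WithLp.toLp 2 (fun i => x i.succ))‖ ^ 2 := Real.sq_sqrt hns
    have hx0 : |x 0| ≤ 1 := hx 0
    have hx2 : (x 0) ^ 2 ≤ 1 := by nlinarith [sq_abs (x 0), abs_nonneg (x 0)]
    have hmul := mul_le_mul_of_nonneg_right hx2 hns
    have h1 : ‖phi (n+1) x‖ ^ 2 ≤ 1 := by
      rw [hsq, mul_pow, hs]; nlinarith
    nlinarith [norm_nonneg (phi (n+1) x)]

lemma phi_norm_eq_one (n : ℕ) (x : EuclideanSpace ℝ (Fin n)) (hx : x ∈ cube n)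
    (j : Fin n) (hj : |x j| = 1) : ‖phi n x‖ = 1 := by
  induction n with
  | zero => exact j.elim0
  | succ n ih =>
    have hy : (WithLp.toLp 2 (fun i => x i.succ)) ∈ cube n := fun k => hx k.succ
    have hp := phi_norm_le n _ hy
    have hpn : (0:ℝ) ≤ ‖phi n (WithLp.toLp 2 (fun i => x i.succ))‖ := norm_nonneg _
    have hsq := phi_norm_sq n x
    have hs : Real.sqrt (1 - ‖phi n (WithLp.toLp 2 (fun i => x i.succ))‖ ^ 2) ^ 2
        = 1 - ‖phi n (WithLp.toLp 2 (fun i => x i.succ))‖ ^ 2 := Real.sq_sqrt (by nlinarith)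
    have key : ‖phi (n+1) x‖ ^ 2 = 1 := by
      rcases Fin.eq_zero_or_eq_succ j with rfl | ⟨k, rfl⟩
      · have : (x 0) ^ 2 = 1 := by rw [← sq_abs, hj]; norm_num
        rw [hsq, mul_pow, hs, this]; ring
      · have h1 : ‖phi n (WithLp.toLp 2 (fun i => x i.succ))‖ = 1 := ih _ hy k hj
        rw [hsq, mul_pow, hs, h1]; ring
    nlinarith [norm_nonneg (phi (n+1) x)]

lemma phi_face_aux : ∀ (n : ℕ) (i : Fin n), 1 ≤ (i : ℕ) →
    ∀ (x x' : EuclideanSpace ℝ (Fin n)), x ∈ cube n → x' ∈ cube n →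
    x i = x' i → (x i = 1 ∨ x i = -1) →
    (∀ j : Fin n, i < j → x j = x' j) → phi n x = phi n x' := by
  intro n
  induction n with
  | zero => exact fun i => i.elim0
  | succ n ih =>
    intro i hi x x' hx hx' heq hval hgt
    have hi0 : i ≠ 0 := by
      intro h; rw [h] at hi; simp at hi
    obtain ⟨j, rfl⟩ := Fin.eq_succ_of_ne_zero hi0
    have hy : (WithLp.toLp 2 (fun k => x k.succ)) ∈ cube n := fun k => hx k.succ
    have hy' : (WithLp.toLp 2 (fun k => x' k.succ)) ∈ cube n := fun k => hx' k.succ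
    have htails : phi n (WithLp.toLp 2 (fun k => x k.succ)) = phi n (WithLp.toLp 2 (fun k => x' k.succ)) := by
      by_cases hj : 1 ≤ (j : ℕ)
      · exact ih j hj _ _ hy hy' heq hval
          (fun k hk => hgt k.succ (Fin.succ_lt_succ_iff.mpr hk))
      · have hj0 : (j : ℕ) = 0 := by omega
        have : (fun k : Fin n => x k.succ) = (fun k : Fin n => x' k.succ) := by
          funext k
          by_cases hk : (k : ℕ) = 0
          · have : k = j := Fin.ext (by omega)
            rw [this]; exact heq
          · exact hgt k.succ (Fin.succ_lt_succ_iff.mpr (by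
              rw [Fin.lt_def]; omega))
        rw [this]
    have hnorm : ‖phi n (WithLp.toLp 2 (fun k => x k.succ))‖ = 1 := by
      refine phi_norm_eq_one n _ hy j ?_
      show |x j.succ| = 1
      rcases hval with h | h <;> rw [h] <;> norm_num
    have hnorm' : ‖phi n (WithLp.toLp 2 (fun k => x' k.succ))‖ = 1 := htails ▸ hnorm
    have hzero : Real.sqrt (1 - ‖phi n (WithLp.toLp 2 (fun k => x k.succ))‖ ^ 2) = 0 := by
      rw [hnorm]; norm_num
    have hzero' : Real.sqrt (1 - ‖phi n (WithLp.toLp 2 (fun k => x' k.succ))‖ ^ 2) = 0 := by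
      rw [hnorm']; norm_num
    show WithLp.toLp 2 (Fin.cons (x 0 * Real.sqrt (1 - ‖phi n (WithLp.toLp 2 (fun k => x k.succ))‖ ^ 2))
          (phi n (WithLp.toLp 2 (fun k => x k.succ))) : Fin (n+1) → ℝ)
        = WithLp.toLp 2 (Fin.cons (x' 0 * Real.sqrt (1 - ‖phi n (WithLp.toLp 2 (fun k => x' k.succ))‖ ^ 2))
          (phi n (WithLp.toLp 2 (fun k => x' k.succ))) : Fin (n+1) → ℝ)
    rw [hzero, hzero', mul_zero, mul_zero, htails]

/-- the image of `φₙ` is globular. For `n ≥ 2` and an index `i ≥ 1`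
(0-based; `2 ≤ i ≤ n` 1-based), if `x, x' ∈ Iⁿ` agree in the `i`-th coordinate, which is
`±1`, and agree in all coordinates after the `i`-th, then `φₙ(x) = φₙ(x')`: on each face
`{xᵢ = ±1}` with `i ≥ 2` the map `φₙ` depends only on the later coordinates. -/
theorem phi_eq_on_faces (n : ℕ) (hn : 2 ≤ n) (i : Fin n) (hi : 1 ≤ (i : ℕ))
    (x x' : EuclideanSpace ℝ (Fin n)) (hx : x ∈ cube n) (hx' : x' ∈ cube n)
    (heq : x i = x' i) (hval : x i = 1 ∨ x i = -1)
    (hgt : ∀ j : Fin n, i < j → x j = x' j) :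
    phi n x = phi n x' :=
  phi_face_aux n i hi x x' hx hx' heq hval hgt
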